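/- Let A⁺, A⁻ : ℝ → ℝ and u⁺, u⁻, û, c ∈ ℝ. Assume the Rankine–Hugoniot condition A⁺(u⁺) = A⁻(u⁻) and that the Kruzkov entropy inequality holds at c. Then: (i) if u⁻ ≤ u⁺ < c < û, then A⁺(c) ≤ A⁻(c); (ii) if u⁻ < c < u⁺ ≤ û, then A⁻(u⁻) ≤ A⁻(c). -/
import Mathlib


open MeasureTheory Filter Set

/-- The Kruzkov entropy inequality at `c` for data `(um, up, uh)`:
`A⁺(u⁺)·sign(u⁺−c) − 2·sign(u⁺−û)·A⁺(c)·𝟙_{(û,u⁺)}(c) ≤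
 A⁻(u⁻)·sign(u⁻−c) − 2·sign(u⁻−û)·A⁻(c)·𝟙_{(û,u⁻)}(c)`. -/
def KruzkovIneq (Ap Am : ℝ → ℝ) (um up uh c : ℝ) : Prop :=
  Ap up * Real.sign (up - c) -
      2 * Real.sign (up - uh) * Ap c * Set.indicator (Set.uIoo uh up) (1 : ℝ → ℝ) c
    ≤ Am um * Real.sign (um - c) -
      2 * Real.sign (um - uh) * Am c * Set.indicator (Set.uIoo uh um) (1 : ℝ → ℝ) c

theorem stmt_12 (Ap Am : ℝ → ℝ) (up um uh c : ℝ)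
    (hRH : Ap up = Am um)
    (hkruz : KruzkovIneq Ap Am um up uh c) :
    (um ≤ up → up < c → c < uh → Ap c ≤ Am c) ∧
    (um < c → c < up → up ≤ uh → Am um ≤ Am c) := by
  unfold KruzkovIneq at hkruz
  constructor
  · intro h1 h2 h3
    have e1 : Real.sign (up - c) = -1 := Real.sign_of_neg (by linarith)
    have e2 : Real.sign (um - c) = -1 := Real.sign_of_neg (by linarith)
    have e3 : Real.sign (up - uh) = -1 := Real.sign_of_neg (by linarith)
    have e4 : Real.sign (um - uh) = -1 := Real.sign_of_neg (by linarith)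
    have i1 : Set.indicator (Set.uIoo uh up) (1 : ℝ → ℝ) c = 1 := by
      rw [Set.uIoo_of_gt (by linarith : up < uh)]
      exact Set.indicator_of_mem (Set.mem_Ioo.mpr ⟨h2, h3⟩) _
    have i2 : Set.indicator (Set.uIoo uh um) (1 : ℝ → ℝ) c = 1 := by
      rw [Set.uIoo_of_gt (by linarith : um < uh)]
      exact Set.indicator_of_mem (Set.mem_Ioo.mpr ⟨by linarith, h3⟩) _
    rw [e1, e2, e3, e4, i1, i2] at hkruz
    linarith
  · intro h1 h2 h3
    have e1 : Real.sign (up - c) = 1 := Real.sign_of_pos (by linarith)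
    have e2 : Real.sign (um - c) = -1 := Real.sign_of_neg (by linarith)
    have e4 : Real.sign (um - uh) = -1 := Real.sign_of_neg (by linarith)
    have i1 : Set.indicator (Set.uIoo uh up) (1 : ℝ → ℝ) c = 0 := by
      rw [Set.uIoo_of_ge h3]
      exact Set.indicator_of_notMem (by simp [Set.mem_Ioo]; intro h; linarith) _
    have i2 : Set.indicator (Set.uIoo uh um) (1 : ℝ → ℝ) c = 1 := by
      rw [Set.uIoo_of_gt (by linarith : um < uh)]
      exact Set.indicator_of_mem (Set.mem_Ioo.mpr ⟨h1, by linarith⟩) _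
    rw [e1, e2, e4, i1, i2] at hkruz
    linarith
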